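/- For every t in the open interval (-1,1), the principal value integral PV ∫_{-1}^{1} (1-s²)^{-1/2}/(t-s) ds equals 0. -/

import Mathlib

open MeasureTheory Set Filter Real

/-- The equilibrium density `ρ(s) = (1-s²)^{-1/2}` on `(-1,1)` lies in the kernel of
the finite (principal-value) Hilbert transform: for every `t ∈ (-1,1)`,
`PV ∫_{-1}^1 (1-s²)^{-1/2}/(t-s) ds = 0`, where the principal value is the limit as
`ε → 0⁺` of the integral over `{s ∈ (-1,1) : ε ≤ |s - t|}`. -/

lemma pv_intLeft (t b : ℝ) (hb : -1 < b) (hbt : b < t) (ht1 : t ≤ 1) :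
    IntervalIntegrable (fun s => (Real.sqrt (1 - s ^ 2))⁻¹ / (t - s)) volume (-1) b := by
  have hb1 : b < 1 := lt_of_lt_of_le hbt ht1
  have hC1 : (0:ℝ) < Real.sqrt (1 - b) := Real.sqrt_pos.2 (by linarith)
  have hg : IntervalIntegrable
      (fun s => (Real.sqrt (1 - b))⁻¹ * (t - b)⁻¹ * ((s + 1) ^ (-(1/2) : ℝ))) volume (-1) b := by
    have h0 : IntervalIntegrable (fun x : ℝ => x ^ (-(1/2) : ℝ)) volume 0 (b + 1) :=
      intervalIntegral.intervalIntegrable_rpow' (by norm_num)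
    have h1 := (h0.comp_add_right 1)
    simp only [zero_sub] at h1
    have h2 : IntervalIntegrable (fun x : ℝ => (x + 1) ^ (-(1/2) : ℝ)) volume (-1) b := by
      convert h1 using 2 <;> ring
    exact (h2.const_mul _)
  refine hg.mono_fun ?_ ?_
  · exact ((((continuous_const.sub (continuous_pow 2)).sqrt).measurable.inv).div
      ((continuous_const.sub continuous_id).measurable)).aestronglyMeasurable
  · rw [Filter.EventuallyLE, ae_restrict_iff' measurableSet_uIoc]
    refine Eventually.of_forall fun s hs => ?_
    rw [uIoc_of_le (by linarith : (-1:ℝ) ≤ b)] at hs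
    obtain ⟨hs1, hs2⟩ := hs
    have h1s : (0:ℝ) < 1 + s := by linarith
    have h1s' : (0:ℝ) < 1 - s := by linarith
    have hts : (0:ℝ) < t - s := by linarith
    have hsq : Real.sqrt (1 - s ^ 2) = Real.sqrt (1 - s) * Real.sqrt (1 + s) := by
      rw [← Real.sqrt_mul (by linarith)]; ring_nf
    have hkey : (Real.sqrt (1 - s ^ 2))⁻¹ ≤ (Real.sqrt (1 - b))⁻¹ * (Real.sqrt (1 + s))⁻¹ := by
      rw [hsq, mul_inv]
      have h1 : (Real.sqrt (1 - s))⁻¹ ≤ (Real.sqrt (1 - b))⁻¹ :=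
        inv_anti₀ hC1 (Real.sqrt_le_sqrt (by linarith))
      exact mul_le_mul_of_nonneg_right h1 (inv_nonneg.2 (Real.sqrt_nonneg _))
    have hrpow : ((s + 1) ^ (-(1/2) : ℝ)) = (Real.sqrt (1 + s))⁻¹ := by
      rw [Real.rpow_neg (by linarith), Real.sqrt_eq_rpow]
      norm_num [add_comm s 1]
    have hf : ‖(Real.sqrt (1 - s ^ 2))⁻¹ / (t - s)‖
        = (Real.sqrt (1 - s ^ 2))⁻¹ * (t - s)⁻¹ := by
      rw [Real.norm_eq_abs, abs_div, abs_of_pos hts, abs_of_nonneg (inv_nonneg.2 (Real.sqrt_nonneg _)),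
        div_eq_mul_inv]
    rw [hf, Real.norm_eq_abs]
    have : (Real.sqrt (1 - s ^ 2))⁻¹ * (t - s)⁻¹
        ≤ (Real.sqrt (1 - b))⁻¹ * (t - b)⁻¹ * ((s + 1) ^ (-(1/2) : ℝ)) := by
      rw [hrpow]
      have h2 : (t - s)⁻¹ ≤ (t - b)⁻¹ := by
        apply inv_anti₀ (by linarith) (by linarith)
      calc (Real.sqrt (1 - s ^ 2))⁻¹ * (t - s)⁻¹
          ≤ ((Real.sqrt (1 - b))⁻¹ * (Real.sqrt (1 + s))⁻¹) * (t - b)⁻¹ := by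
            apply mul_le_mul hkey h2 (by positivity) (by positivity)
        _ = (Real.sqrt (1 - b))⁻¹ * (t - b)⁻¹ * (Real.sqrt (1 + s))⁻¹ := by ring
    exact le_trans this (le_abs_self _)

lemma pv_intRight (t u : ℝ) (hu : u < 1) (htu : t < u) (ht1 : -1 ≤ t) :
    IntervalIntegrable (fun s => (Real.sqrt (1 - s ^ 2))⁻¹ / (t - s)) volume u 1 := by
  have h := pv_intLeft (-t) (-u) (by linarith) (by linarith) (by linarith)
  have h2 := ((IntervalIntegrable.iff_comp_neg).mp h)
  simp only [neg_neg] at h2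
  have h3 := h2.neg
  have heq : (fun s => (Real.sqrt (1 - s ^ 2))⁻¹ / (t - s))
      = fun s => -((Real.sqrt (1 - (-s) ^ 2))⁻¹ / (-t - -s)) := by
    funext s
    rw [neg_sq, show -t - -s = -(t - s) by ring, div_neg, neg_neg]
  rw [heq]
  exact h3.symm

noncomputable def pvF (t s : ℝ) : ℝ :=
  (Real.sqrt (1 - t ^ 2))⁻¹ *
    (Real.log (Real.sqrt (1 - t ^ 2) * Real.sqrt (1 - s ^ 2) + 1 - t * s) - Real.log (t - s))

lemma pv_g_pos (t s : ℝ) (ht : t ∈ Ioo (-1:ℝ) 1) (hs : s ∈ Icc (-1:ℝ) 1) :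
    0 < Real.sqrt (1 - t ^ 2) * Real.sqrt (1 - s ^ 2) + 1 - t * s := by
  obtain ⟨ht1, ht2⟩ := ht
  obtain ⟨hs1, hs2⟩ := hs
  have hts : t * s < 1 := by
    nlinarith [mul_nonneg (by linarith : (0:ℝ) ≤ 1 - t) (by linarith : (0:ℝ) ≤ 1 + s),
      mul_nonneg (by linarith : (0:ℝ) ≤ 1 + t) (by linarith : (0:ℝ) ≤ 1 - s)]
  nlinarith [mul_nonneg (Real.sqrt_nonneg (1 - t ^ 2)) (Real.sqrt_nonneg (1 - s ^ 2))]

lemma pv_deriv (t s : ℝ) (ht : t ∈ Ioo (-1:ℝ) 1) (hs : s ∈ Ioo (-1:ℝ) 1) (hst : s ≠ t) :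
    HasDerivAt (pvF t) ((Real.sqrt (1 - s ^ 2))⁻¹ / (t - s)) s := by
  obtain ⟨ht1, ht2⟩ := ht
  obtain ⟨hs1, hs2⟩ := hs
  have hb2 : (0:ℝ) < 1 - s ^ 2 := by nlinarith
  have ha2 : (0:ℝ) < 1 - t ^ 2 := by nlinarith
  have hb : (0:ℝ) < Real.sqrt (1 - s ^ 2) := Real.sqrt_pos.2 hb2
  have ha : (0:ℝ) < Real.sqrt (1 - t ^ 2) := Real.sqrt_pos.2 ha2
  have hbsq : Real.sqrt (1 - s ^ 2) ^ 2 = 1 - s ^ 2 := Real.sq_sqrt hb2.le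
  have hasq : Real.sqrt (1 - t ^ 2) ^ 2 = 1 - t ^ 2 := Real.sq_sqrt ha2.le
  have hg : (0:ℝ) < Real.sqrt (1 - t ^ 2) * Real.sqrt (1 - s ^ 2) + 1 - t * s :=
    pv_g_pos t s ⟨ht1, ht2⟩ ⟨hs1.le, hs2.le⟩
  have hts : t - s ≠ 0 := sub_ne_zero.2 (Ne.symm hst)
  have h1 : HasDerivAt (fun x : ℝ => 1 - x ^ 2) (-(2 * s)) s := by
    simpa using ((hasDerivAt_pow 2 s).const_sub 1)
  have h2 : HasDerivAt (fun x : ℝ => Real.sqrt (1 - x ^ 2))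
      (-(2 * s) / (2 * Real.sqrt (1 - s ^ 2))) s := h1.sqrt (by positivity)
  have h3 : HasDerivAt (fun x : ℝ => Real.sqrt (1 - t ^ 2) * Real.sqrt (1 - x ^ 2) + 1 - t * x)
      (Real.sqrt (1 - t ^ 2) * (-(2 * s) / (2 * Real.sqrt (1 - s ^ 2))) - t) s := by
    have := (((h2.const_mul (Real.sqrt (1 - t ^ 2))).add_const 1).sub
      ((hasDerivAt_id s).const_mul t))
    rw [mul_one] at this
    exact this
  have h4 := h3.log (ne_of_gt hg)
  have h5 : HasDerivAt (fun x : ℝ => Real.log (t - x)) (-1 / (t - s)) s := by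
    have := ((hasDerivAt_id s).const_sub t).log hts
    simpa using this
  have h6 := (h4.sub h5).const_mul (Real.sqrt (1 - t ^ 2))⁻¹
  refine h6.congr_deriv ?_
  symm
  set A := Real.sqrt (1 - t ^ 2) with hA
  set B := Real.sqrt (1 - s ^ 2) with hB
  have hg' : B * A + 1 - t * s ≠ 0 := by rw [mul_comm]; exact hg.ne'
  field_simp
  linear_combination B * hasq - A * hbsq

lemma pv_contOn (t : ℝ) (ht : t ∈ Ioo (-1:ℝ) 1) (S : Set ℝ) (hS : S ⊆ Icc (-1:ℝ) 1)
    (hne : ∀ s ∈ S, t - s ≠ 0) : ContinuousOn (pvF t) S := by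
  unfold pvF
  apply ContinuousOn.mul continuousOn_const
  apply ContinuousOn.sub
  · apply ContinuousOn.log
    · exact (((continuous_const.mul ((continuous_const.sub (continuous_pow 2)).sqrt)).add
        continuous_const).sub (continuous_const.mul continuous_id)).continuousOn
    · intro s hs; exact (pv_g_pos t s ht (hS hs)).ne'
  · exact ContinuousOn.log ((continuous_const.sub continuous_id).continuousOn) hne

lemma pvF_neg_one (t : ℝ) : pvF t (-1) = 0 := by
  unfold pvF
  norm_num
  ring_nf
  exact Or.inr trivial

lemma pvF_one (t : ℝ) : pvF t 1 = 0 := by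
  unfold pvF
  norm_num
  rw [show t - 1 = -(1 - t) by ring, Real.log_neg_eq_log]
  ring_nf
  exact Or.inr trivial

lemma pv_left_eq (t ε : ℝ) (ht : t ∈ Ioo (-1:ℝ) 1) (hε : 0 < ε) (h1 : -1 < t - ε) :
    ∫ s in (-1)..(t - ε), (Real.sqrt (1 - s ^ 2))⁻¹ / (t - s) = pvF t (t - ε) := by
  have h := intervalIntegral.integral_eq_sub_of_hasDerivAt_of_le (f := pvF t)
    (by linarith : (-1:ℝ) ≤ t - ε)
    (pv_contOn t ht _ (fun s hs => ⟨hs.1, by cases hs; linarith [ht.2]⟩)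
      (fun s hs => by cases hs; intro h; linarith))
    (fun x hx => pv_deriv t x ht ⟨hx.1, by cases hx; linarith [ht.2]⟩ (by cases hx; linarith))
    (pv_intLeft t (t - ε) h1 (by linarith) ht.2.le)
  rw [h, pvF_neg_one, sub_zero]

lemma pv_right_eq (t ε : ℝ) (ht : t ∈ Ioo (-1:ℝ) 1) (hε : 0 < ε) (h1 : t + ε < 1) :
    ∫ s in (t + ε)..1, (Real.sqrt (1 - s ^ 2))⁻¹ / (t - s) = -pvF t (t + ε) := by
  have h := intervalIntegral.integral_eq_sub_of_hasDerivAt_of_le (f := pvF t)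
    (by linarith : t + ε ≤ 1)
    (pv_contOn t ht _ (fun s hs => ⟨by cases hs; linarith [ht.1], hs.2⟩)
      (fun s hs => by cases hs; intro h; linarith))
    (fun x hx => pv_deriv t x ht ⟨by cases hx; linarith [ht.1], hx.2⟩ (by cases hx; linarith))
    (pv_intRight t (t + ε) h1 (by linarith) ht.1.le)
  rw [h, pvF_one, zero_sub]

theorem stmt_0 (t : ℝ) (ht : t ∈ Ioo (-1 : ℝ) 1) :
    Tendsto (fun ε : ℝ =>
        ∫ s in {s ∈ Ioo (-1 : ℝ) 1 | ε ≤ |s - t|}, (Real.sqrt (1 - s ^ 2))⁻¹ / (t - s))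
      (nhdsWithin 0 (Ioi 0)) (nhds 0) := by
  obtain ⟨ht1, ht2⟩ := ht
  set A := Real.sqrt (1 - t ^ 2) with hAdef
  set G : ℝ → ℝ := fun s => A * Real.sqrt (1 - s ^ 2) + 1 - t * s with hGdef
  have hGcont : Continuous G := ((continuous_const.mul
    ((continuous_const.sub (continuous_pow 2)).sqrt)).add continuous_const).sub
    (continuous_const.mul continuous_id)
  have hGt : 0 < G t := pv_g_pos t t ⟨ht1, ht2⟩ ⟨by linarith, by linarith⟩
  have hψ : Tendsto (fun ε : ℝ => A⁻¹ * (Real.log (G (t - ε)) - Real.log (G (t + ε))))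
      (nhds 0) (nhds 0) := by
    have c1 : ContinuousAt (fun ε : ℝ => Real.log (G (t - ε))) 0 := by
      exact ContinuousAt.comp (Real.continuousAt_log (by simpa using hGt.ne'))
        ((hGcont.comp (continuous_const.sub continuous_id)).continuousAt)
    have c2 : ContinuousAt (fun ε : ℝ => Real.log (G (t + ε))) 0 := by
      exact ContinuousAt.comp (Real.continuousAt_log (by simpa using hGt.ne'))
        ((hGcont.comp (continuous_const.add continuous_id)).continuousAt)
    have c3 := ((c1.sub c2).const_mul (A⁻¹))
    simpa [ContinuousAt] using c3
  refine Tendsto.congr' ?_ (hψ.mono_left nhdsWithin_le_nhds)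
  have hδ : Ioo (0:ℝ) (min (1 + t) (1 - t)) ∈ nhdsWithin (0:ℝ) (Ioi 0) :=
    Ioo_mem_nhdsGT_of_mem ⟨le_rfl, lt_min (by linarith) (by linarith)⟩
  filter_upwards [hδ] with ε hε
  obtain ⟨hε0, hεδ⟩ := hε
  obtain ⟨hεa, hεb⟩ := lt_min_iff.mp hεδ
  have hεt1 : -1 < t - ε := by linarith
  have hεt2 : t + ε < 1 := by linarith
  have hset : {s ∈ Ioo (-1 : ℝ) 1 | ε ≤ |s - t|} = Ioc (-1) (t - ε) ∪ Ico (t + ε) 1 := by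
    ext s
    simp only [mem_setOf_eq, mem_Ioo, mem_union, mem_Ioc, mem_Ico, le_abs]
    constructor
    · rintro ⟨⟨h1, h2⟩, h3 | h3⟩
      · right; constructor <;> linarith
      · left; constructor <;> linarith
    · rintro (⟨h1, h2⟩ | ⟨h1, h2⟩)
      · exact ⟨⟨h1, by linarith⟩, Or.inr (by linarith)⟩
      · exact ⟨⟨by linarith, h2⟩, Or.inl (by linarith)⟩
  have hL := pv_intLeft t (t - ε) hεt1 (by linarith) (le_of_lt ht2)
  have hR := pv_intRight t (t + ε) hεt2 (by linarith) (le_of_lt ht1)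
  have hIL : IntegrableOn (fun s => (Real.sqrt (1 - s ^ 2))⁻¹ / (t - s))
      (Ioc (-1) (t - ε)) volume := hL.1
  have hIR : IntegrableOn (fun s => (Real.sqrt (1 - s ^ 2))⁻¹ / (t - s))
      (Ico (t + ε) 1) volume := hR.1.congr_set_ae Ico_ae_eq_Ioc
  have hdisj : Disjoint (Ioc (-1:ℝ) (t - ε)) (Ico (t + ε) 1) := by
    rw [Set.disjoint_left]
    rintro s ⟨_, hs2⟩ ⟨hs3, _⟩
    linarith
  rw [hset, setIntegral_union hdisj measurableSet_Ico hIL hIR]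
  have e1 : ∫ s in Ioc (-1:ℝ) (t - ε), (Real.sqrt (1 - s ^ 2))⁻¹ / (t - s)
      = ∫ s in (-1:ℝ)..(t - ε), (Real.sqrt (1 - s ^ 2))⁻¹ / (t - s) :=
    (intervalIntegral.integral_of_le (by linarith)).symm
  have e2 : ∫ s in Ico (t + ε) 1, (Real.sqrt (1 - s ^ 2))⁻¹ / (t - s)
      = ∫ s in (t + ε)..1, (Real.sqrt (1 - s ^ 2))⁻¹ / (t - s) := by
    rw [intervalIntegral.integral_of_le (by linarith : t + ε ≤ 1)]
    exact setIntegral_congr_set Ico_ae_eq_Ioc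
  rw [e1, e2, pv_left_eq t ε ⟨ht1, ht2⟩ hε0 hεt1, pv_right_eq t ε ⟨ht1, ht2⟩ hε0 hεt2]
  simp only [hGdef]
  unfold pvF
  rw [show t - (t - ε) = ε by ring, show t - (t + ε) = -ε by ring, Real.log_neg_eq_log]
  rw [← hAdef]
  ring
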